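/- (Claim 9) Let k ≥ 2 and n ≥ 3 be integers, let A ⊆ [k]^n be a compressed set with B_{≥1} ⊆ A, and set D = A ∩ B_0. Let y ∈ d(D) and let x ∈ [k]^n satisfy |R_0(x)| = 1 and x ≤ y in the ≤-order. If moreover there exists an index i with x_i = y_i, then x ∈ d(D). -/

import Mathlib

open Finset
open scoped Classical

/-- `R_i(x)`: the set of coordinates of `x` equal to `i`.
The ambient alphabet is `[k+1] = {0,…,k}`. -/
noncomputable def rset {k N : ℕ} (x : Fin N → Fin (k + 1)) (i : ℕ) : Finset (Fin N) :=
  Finset.univ.filter fun j => (x j : ℕ) = i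

/-- the strict binary order on finite sets of coordinates:
`X <_bin Y` iff `X ≠ Y` and `max (X Δ Y) ∈ Y`. -/
def binLT {N : ℕ} (X Y : Finset (Fin N)) : Prop :=
  ∃ m ∈ Y, m ∉ X ∧ ∀ j : Fin N, ((j ∈ X ∧ j ∉ Y) ∨ (j ∈ Y ∧ j ∉ X)) → j ≤ m

/-- the strict `≤`-order on `[k+1]^N`: `x < y` iff `|R_0(x)| > |R_0(y)|`, or
`|R_0(x)| = |R_0(y)|` and for the largest `i` with `R_i(x) ≠ R_i(y)` we have
`max (R_i(x) Δ R_i(y)) ∈ R_i(y)`. -/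
def plt {k N : ℕ} (x y : Fin N → Fin (k + 1)) : Prop :=
  (rset y 0).card < (rset x 0).card ∨
    ((rset x 0).card = (rset y 0).card ∧
      ∃ i : ℕ, binLT (rset x i) (rset y i) ∧ ∀ j : ℕ, i < j → rset x j = rset y j)

/-- the `≤`-order on `[k+1]^N`. -/
def ple {k N : ℕ} (x y : Fin N → Fin (k + 1)) : Prop := x = y ∨ plt x y

/-- `B` is an initial segment of the `≤`-order. -/
def isInitSeg {k N : ℕ} (B : Finset (Fin N → Fin (k + 1))) : Prop :=
  ∀ y ∈ B, ∀ x, ple x y → x ∈ B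

/-- the `d`-shadow: all points obtained from a point of `A` by flipping one
nonzero coordinate to `0`. -/
noncomputable def dShadow {k N : ℕ} (A : Finset (Fin N → Fin (k + 1))) :
    Finset (Fin N → Fin (k + 1)) :=
  A.biUnion fun x =>
    (Finset.univ.filter fun i => x i ≠ 0).image fun i => Function.update x i 0

/-- the initial segment of the `≤`-order on `[k+1]^N` of cardinality `m`. -/
noncomputable def initSeg (k N m : ℕ) : Finset (Fin N → Fin (k + 1)) :=
  Finset.univ.filter fun x => (Finset.univ.filter fun y => ple y x).card ≤ m

/-- the `C_s`-compression of `A ⊆ [k+1]^(n+1)`: replace each slice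
`A_{s,t} = {y : t_s y ∈ A}` by the initial segment of the same size. -/
noncomputable def compress {k n : ℕ} (s : Fin (n + 1)) (A : Finset (Fin (n + 1) → Fin (k + 1))) :
    Finset (Fin (n + 1) → Fin (k + 1)) :=
  Finset.univ.biUnion fun t : Fin (k + 1) =>
    (initSeg k n
        (Finset.univ.filter fun y : Fin n → Fin (k + 1) => s.insertNth t y ∈ A).card).image
      fun y => s.insertNth t y

/-- `A` is compressed if every `C_s`-compression fixes it. -/
def IsCompressed {k n : ℕ} (A : Finset (Fin (n + 1) → Fin (k + 1))) : Prop :=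
  ∀ s : Fin (n + 1), compress s A = A

/-- `B_r`: points with exactly `r` zero coordinates. -/
noncomputable def Bexact (k N r : ℕ) : Finset (Fin N → Fin (k + 1)) :=
  Finset.univ.filter fun x => (rset x 0).card = r

/-- `B_{≥r}`: points with at least `r` zero coordinates. -/
noncomputable def Bge (k N r : ℕ) : Finset (Fin N → Fin (k + 1)) :=
  Finset.univ.filter fun x => r ≤ (rset x 0).card

/-- `m(x)`: the largest coordinate value of `x`. -/
noncomputable def mval {k N : ℕ} (x : Fin N → Fin (k + 1)) : ℕ :=
  Finset.univ.sup fun i => (x i : ℕ)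

/-- the class `C_X`: points with maximal coordinate `s`, attained exactly on `X`,
and exactly `r` zero coordinates. -/
noncomputable def classSet (k N s r : ℕ) (X : Finset (Fin N)) : Finset (Fin N → Fin (k + 1)) :=
  Finset.univ.filter fun x => mval x = s ∧ rset x s = X ∧ (rset x 0).card = r

/-- `[m]^N = {0,…,m−1}^N`. -/
noncomputable def box (k N m : ℕ) : Finset (Fin N → Fin (k + 1)) :=
  Finset.univ.filter fun x => ∀ i, (x i : ℕ) < m

/-- `{1,…,s−1}^N`. -/
noncomputable def box1 (k N s : ℕ) : Finset (Fin N → Fin (k + 1)) :=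
  Finset.univ.filter fun x => ∀ i, 1 ≤ (x i : ℕ) ∧ (x i : ℕ) ≤ s - 1

/-- `B` is a down-set. -/
def isDownSet {k N : ℕ} (B : Finset (Fin N → Fin (k + 1))) : Prop :=
  ∀ y ∈ B, ∀ x : Fin N → Fin (k + 1), (∀ j, (x j : ℕ) ≤ (y j : ℕ)) → x ∈ B

lemma mem_rset {k N : ℕ} {x : Fin N → Fin (k+1)} {i : ℕ} {a : Fin N} :
    a ∈ rset x i ↔ (x a : ℕ) = i := by simp [rset]

lemma rset_update {k N : ℕ} (x : Fin N → Fin (k+1)) (p : Fin N) (c : Fin (k+1)) (j : ℕ) :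
    rset (Function.update x p c) j =
      if (c : ℕ) = j then insert p (rset x j) else (rset x j).erase p := by
  ext a
  by_cases hap : a = p
  · subst hap
    by_cases hc : (c : ℕ) = j <;> simp [mem_rset, hc, Function.update_self]
  · by_cases hc : (c : ℕ) = j <;>
      simp [mem_rset, hc, Function.update_of_ne hap, hap]

def val2 {N : ℕ} (X : Finset (Fin N)) : ℕ := ∑ j ∈ X, 2 ^ (j : ℕ)

lemma sum_range_two_pow (c : ℕ) : ∑ m ∈ Finset.range c, 2 ^ m = 2 ^ c - 1 := by
  induction c with
  | zero => simp
  | succ c ih =>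
    rw [Finset.sum_range_succ, ih]
    have : 1 ≤ 2 ^ c := Nat.one_le_two_pow
    have : 2 ^ (c+1) = 2 * 2^c := by ring
    omega

lemma val2_lt_pow {N c : ℕ} (S : Finset (Fin N)) (h : ∀ j ∈ S, (j : ℕ) < c) :
    val2 S < 2 ^ c := by
  have h1 : val2 S = ∑ m ∈ S.image (fun j : Fin N => (j : ℕ)), 2 ^ m :=
    (Finset.sum_image (fun a _ b _ hab => Fin.val_injective hab)).symm
  have h2 : S.image (fun j : Fin N => (j : ℕ)) ⊆ Finset.range c := by
    intro m hm
    simp only [Finset.mem_image] at hm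
    obtain ⟨j, hj, rfl⟩ := hm
    exact Finset.mem_range.2 (h j hj)
  have h3 : 1 ≤ 2 ^ c := Nat.one_le_two_pow
  calc val2 S = _ := h1
    _ ≤ ∑ m ∈ Finset.range c, 2 ^ m := Finset.sum_le_sum_of_subset h2
    _ = 2 ^ c - 1 := sum_range_two_pow c
    _ < 2 ^ c := by omega

lemma binLT.val2_lt {N : ℕ} {X Y : Finset (Fin N)} (h : binLT X Y) : val2 X < val2 Y := by
  obtain ⟨e, heY, heX, hmax⟩ := h
  have hhi : X.filter (fun j => e < j) = Y.filter (fun j => e < j) := by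
    ext j
    simp only [Finset.mem_filter]
    constructor
    · rintro ⟨hjX, hje⟩
      refine ⟨?_, hje⟩
      by_contra hjY
      exact absurd (hmax j (Or.inl ⟨hjX, hjY⟩)) (not_le.2 hje)
    · rintro ⟨hjY, hje⟩
      refine ⟨?_, hje⟩
      by_contra hjX
      exact absurd (hmax j (Or.inr ⟨hjY, hjX⟩)) (not_le.2 hje)
  have hXlo : ∑ j ∈ X.filter (fun j => ¬ e < j), 2 ^ (j : ℕ) < 2 ^ (e : ℕ) := by
    refine val2_lt_pow _ ?_
    intro j hj
    simp only [Finset.mem_filter, not_lt] at hj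
    have hje : j ≠ e := by rintro rfl; exact heX hj.1
    exact Fin.lt_def.1 (lt_of_le_of_ne hj.2 hje)
  have hYlo : 2 ^ (e : ℕ) ≤ ∑ j ∈ Y.filter (fun j => ¬ e < j), 2 ^ (j : ℕ) := by
    refine Finset.single_le_sum (f := fun j : Fin N => 2 ^ (j : ℕ)) (fun i _ => Nat.zero_le _) ?_
    simp [heY]
  have hX := (Finset.sum_filter_add_sum_filter_not X (fun j => e < j) (fun j : Fin N => 2 ^ (j:ℕ))).symm
  have hY := (Finset.sum_filter_add_sum_filter_not Y (fun j => e < j) (fun j : Fin N => 2 ^ (j:ℕ))).symm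
  show (∑ j ∈ X, 2 ^ (j:ℕ)) < ∑ j ∈ Y, 2 ^ (j:ℕ)
  rw [hX, hY, hhi]
  omega

lemma binLT_total {N : ℕ} {X Y : Finset (Fin N)} (h : X ≠ Y) : binLT X Y ∨ binLT Y X := by
  have hne : ((X \ Y) ∪ (Y \ X)).Nonempty := by
    rw [Finset.nonempty_iff_ne_empty]
    intro hemp
    apply h
    rw [Finset.union_eq_empty] at hemp
    exact Finset.Subset.antisymm (Finset.sdiff_eq_empty_iff_subset.1 hemp.1)
      (Finset.sdiff_eq_empty_iff_subset.1 hemp.2)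
  have hemem := Finset.max'_mem _ hne
  set e := ((X \ Y) ∪ (Y \ X)).max' hne with he
  have hmax : ∀ j : Fin N, (j ∈ X ∧ j ∉ Y) ∨ (j ∈ Y ∧ j ∉ X) → j ≤ e := by
    intro j hj
    apply Finset.le_max'
    rcases hj with ⟨h1, h2⟩ | ⟨h1, h2⟩
    · exact Finset.mem_union_left _ (Finset.mem_sdiff.2 ⟨h1, h2⟩)
    · exact Finset.mem_union_right _ (Finset.mem_sdiff.2 ⟨h1, h2⟩)
  rcases Finset.mem_union.1 hemem with hm | hm
  · rw [Finset.mem_sdiff] at hm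
    exact Or.inr ⟨e, hm.1, hm.2, fun j hj => hmax j hj.symm⟩
  · rw [Finset.mem_sdiff] at hm
    exact Or.inl ⟨e, hm.1, hm.2, fun j hj => hmax j hj⟩

lemma binLT_iff_val2 {N : ℕ} {X Y : Finset (Fin N)} : binLT X Y ↔ val2 X < val2 Y := by
  constructor
  · exact binLT.val2_lt
  · intro h
    have hne : X ≠ Y := by rintro rfl; exact lt_irrefl _ h
    rcases binLT_total hne with h1 | h1
    · exact h1
    · exact absurd h1.val2_lt (by omega)

lemma binLT_trans {N : ℕ} {X Y Z : Finset (Fin N)} (h1 : binLT X Y) (h2 : binLT Y Z) :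
    binLT X Z :=
  binLT_iff_val2.2 (lt_trans (binLT_iff_val2.1 h1) (binLT_iff_val2.1 h2))

lemma plt_trans {k N : ℕ} {x y z : Fin N → Fin (k+1)} (h1 : plt x y) (h2 : plt y z) :
    plt x z := by
  rcases h1 with h1 | ⟨hc1, i1, hb1, he1⟩
  · rcases h2 with h2 | ⟨hc2, _⟩
    · exact Or.inl (lt_trans h2 h1)
    · exact Or.inl (by omega)
  · rcases h2 with h2 | ⟨hc2, i2, hb2, he2⟩
    · exact Or.inl (by omega)
    · refine Or.inr ⟨by omega, ?_⟩
      rcases lt_trichotomy i1 i2 with hlt | rfl | hgt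
      · exact ⟨i2, by rw [he1 i2 hlt]; exact hb2,
          fun j hj => (he1 j (lt_trans hlt hj)).trans (he2 j hj)⟩
      · exact ⟨i1, binLT_trans hb1 hb2, fun j hj => (he1 j hj).trans (he2 j hj)⟩
      · exact ⟨i1, by rw [← he2 i1 hgt]; exact hb1,
          fun j hj => (he1 j hj).trans (he2 j (lt_trans hgt hj))⟩

lemma ple_trans {k N : ℕ} {x y z : Fin N → Fin (k+1)} (h1 : ple x y) (h2 : ple y z) :
    ple x z := by
  rcases h1 with rfl | h1
  · exact h2
  · rcases h2 with rfl | h2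
    · exact Or.inr h1
    · exact Or.inr (plt_trans h1 h2)

lemma binLT_insert_insert {N : ℕ} {X Y : Finset (Fin N)} {q : Fin N} (h : binLT X Y)
    (hqY : q ∉ Y) : binLT (insert q X) (insert q Y) := by
  obtain ⟨e, heY, heX, hmax⟩ := h
  have heq : e ≠ q := fun h' => hqY (h' ▸ heY)
  refine ⟨e, Finset.mem_insert_of_mem heY, ?_, ?_⟩
  · simp only [Finset.mem_insert, not_or]
    exact ⟨heq, heX⟩
  · intro j hj
    rcases hj with ⟨h1, h2⟩ | ⟨h1, h2⟩
    · have hjq : j ≠ q := fun h' => h2 (h' ▸ Finset.mem_insert_self q Y)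
      rcases Finset.mem_insert.1 h1 with rfl | h1
      · exact absurd rfl hjq
      · exact hmax j (Or.inl ⟨h1, fun hh => h2 (Finset.mem_insert_of_mem hh)⟩)
    · have hjq : j ≠ q := fun h' => h2 (h' ▸ Finset.mem_insert_self q X)
      rcases Finset.mem_insert.1 h1 with rfl | h1
      · exact absurd rfl hjq
      · exact hmax j (Or.inr ⟨h1, fun hh => h2 (Finset.mem_insert_of_mem hh)⟩)

lemma binLT_insert_right {N : ℕ} {X Y : Finset (Fin N)} {p : Fin N} (h : binLT X Y)
    (hpY : p ∉ Y) : binLT X (insert p Y) := by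
  obtain ⟨e, heY, heX, hmax⟩ := h
  by_cases hpe : p ≤ e
  · refine ⟨e, Finset.mem_insert_of_mem heY, heX, ?_⟩
    intro j hj
    rcases hj with ⟨h1, h2⟩ | ⟨h1, h2⟩
    · exact hmax j (Or.inl ⟨h1, fun hh => h2 (Finset.mem_insert_of_mem hh)⟩)
    · rcases Finset.mem_insert.1 h1 with rfl | h1
      · exact hpe
      · exact hmax j (Or.inr ⟨h1, h2⟩)
  · have hpX : p ∉ X := fun hpX => hpe (hmax p (Or.inl ⟨hpX, hpY⟩))
    refine ⟨p, Finset.mem_insert_self _ _, hpX, ?_⟩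
    intro j hj
    rcases hj with ⟨h1, h2⟩ | ⟨h1, h2⟩
    · exact le_trans (hmax j (Or.inl ⟨h1, fun hh => h2 (Finset.mem_insert_of_mem hh)⟩))
        (le_of_not_ge hpe)
    · rcases Finset.mem_insert.1 h1 with rfl | h1
      · exact le_refl _
      · exact le_trans (hmax j (Or.inr ⟨h1, h2⟩)) (le_of_not_ge hpe)

lemma binLT_self_insert {N : ℕ} {X : Finset (Fin N)} {p : Fin N} (hp : p ∉ X) :
    binLT X (insert p X) := by
  refine ⟨p, Finset.mem_insert_self _ _, hp, ?_⟩
  intro j hj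
  rcases hj with ⟨h1, h2⟩ | ⟨h1, h2⟩
  · exact absurd (Finset.mem_insert_of_mem h1) h2
  · rcases Finset.mem_insert.1 h1 with rfl | h1
    · exact le_refl _
    · exact absurd h1 h2

lemma mem_rset_removeNth {k n : ℕ} {x : Fin (n+1) → Fin (k+1)} {i : Fin (n+1)} {j : ℕ}
    {a : Fin n} : a ∈ rset (i.removeNth x) j ↔ i.succAbove a ∈ rset x j := by
  unfold rset
  rw [Finset.mem_filter, Finset.mem_filter]
  simp [Fin.removeNth]

lemma card_rset_removeNth {k n : ℕ} (x : Fin (n+1) → Fin (k+1)) (i : Fin (n+1)) (j : ℕ) :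
    (rset (i.removeNth x) j).card = ((rset x j).erase i).card := by
  rw [← Finset.card_image_of_injective (rset (i.removeNth x) j)
    (Fin.succAbove_right_injective (p := i))]
  congr 1
  ext b
  simp only [Finset.mem_image, Finset.mem_erase]
  constructor
  · rintro ⟨a, ha, rfl⟩
    exact ⟨Fin.succAbove_ne i a, mem_rset_removeNth.1 ha⟩
  · rintro ⟨hbi, hb⟩
    obtain ⟨a, rfl⟩ := Fin.exists_succAbove_eq hbi
    exact ⟨a, mem_rset_removeNth.2 hb, rfl⟩

lemma plt_removeNth {k n : ℕ} {x y : Fin (n+1) → Fin (k+1)} (i : Fin (n+1))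
    (h : plt x y) (hi : x i = y i) : plt (i.removeNth x) (i.removeNth y) := by
  have hmem : ∀ j : ℕ, i ∈ rset x j ↔ i ∈ rset y j := by
    intro j; simp [mem_rset, hi]
  have hcard : ∀ (c : ℕ), True := fun _ => trivial
  have hc0 : ((rset (i.removeNth x) 0).card : ℤ) - (rset (i.removeNth y) 0).card
      = ((rset x 0).card : ℤ) - (rset y 0).card := by
    rw [card_rset_removeNth, card_rset_removeNth]
    by_cases h0 : i ∈ rset x 0
    · have h0' := (hmem 0).1 h0
      have hx1 : 0 < (rset x 0).card := Finset.card_pos.2 ⟨i, h0⟩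
      have hy1 : 0 < (rset y 0).card := Finset.card_pos.2 ⟨i, h0'⟩
      rw [Finset.card_erase_of_mem h0, Finset.card_erase_of_mem h0']
      push_cast
      omega
    · rw [Finset.erase_eq_of_notMem h0,
        Finset.erase_eq_of_notMem (fun hh => h0 ((hmem 0).2 hh))]
  have hcle : ((rset (i.removeNth x) 0).card ≤ (rset x 0).card) := by
    rw [card_rset_removeNth]; exact Finset.card_le_card (Finset.erase_subset _ _)
  rcases h with h | ⟨hc, m, hb, he⟩
  · exact Or.inl (by omega)
  · refine Or.inr ⟨by omega, m, ?_, ?_⟩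
    · obtain ⟨e, heY, heX, hmax⟩ := hb
      have hei : e ≠ i := by
        rintro rfl
        exact heX ((hmem m).2 heY)
      obtain ⟨e', rfl⟩ := Fin.exists_succAbove_eq hei
      refine ⟨e', mem_rset_removeNth.2 heY, fun hh => heX (mem_rset_removeNth.1 hh), ?_⟩
      intro a ha
      have h2 : i.succAbove a ≤ i.succAbove e' := by
        apply hmax
        rcases ha with ⟨h1, h2⟩ | ⟨h1, h2⟩
        · exact Or.inl ⟨mem_rset_removeNth.1 h1, fun hh => h2 (mem_rset_removeNth.2 hh)⟩
        · exact Or.inr ⟨mem_rset_removeNth.1 h1, fun hh => h2 (mem_rset_removeNth.2 hh)⟩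
      exact Fin.succAbove_le_succAbove_iff.1 h2
    · intro j hj
      ext a
      rw [mem_rset_removeNth, mem_rset_removeNth, he j hj]

lemma ple_removeNth {k n : ℕ} {x y : Fin (n+1) → Fin (k+1)} (i : Fin (n+1))
    (h : ple x y) (hi : x i = y i) : ple (i.removeNth x) (i.removeNth y) := by
  rcases h with rfl | h
  · exact Or.inl rfl
  · exact Or.inr (plt_removeNth i h hi)

lemma mem_of_ple_slice {k n : ℕ} (A : Finset (Fin (n+1) → Fin (k+1))) (hA : IsCompressed A)
    (i : Fin (n+1)) {z w : Fin (n+1) → Fin (k+1)} (hz : z ∈ A) (hwz : w i = z i)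
    (h : ple w z) : w ∈ A := by
  have h' := ple_removeNth i h hwz
  rw [← hA i] at hz ⊢
  simp only [compress, Finset.mem_biUnion, Finset.mem_univ, true_and, Finset.mem_image] at hz ⊢
  obtain ⟨t, z', hz', hzeq⟩ := hz
  have hzi : z i = t := by rw [← hzeq, Fin.insertNth_apply_same]
  have hzrm : i.removeNth z = z' := by rw [← hzeq, Fin.removeNth_insertNth]
  refine ⟨t, i.removeNth w, ?_, ?_⟩
  · simp only [initSeg, Finset.mem_filter, Finset.mem_univ, true_and] at hz' ⊢
    refine le_trans (Finset.card_le_card ?_) hz'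
    intro v hv
    simp only [Finset.mem_filter, Finset.mem_univ, true_and] at hv ⊢
    exact ple_trans hv (hzrm ▸ h')
  · rw [← hzi, ← hwz]
    exact Fin.insertNth_self_removeNth i w


/-- **Claim 9.** Let `k ≥ 2`, `n ≥ 3`, let `A ⊆ [k]^n` be compressed with `B_{≥1} ⊆ A`
and set `D = A ∩ B_0`. If `y ∈ d(D)`, `x` satisfies `|R_0(x)| = 1` and `x ≤ y`, and
`x_i = y_i` for some index `i`, then `x ∈ d(D)`.
(Dimension `n ≥ 3` is rendered as `n + 1` with `n ≥ 2`; alphabet `[k]` with `k ≥ 2`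
as `Fin (k+1)` with `k ≥ 1`.) -/

theorem claim9 (k n : ℕ) (hk : 1 ≤ k) (hn : 2 ≤ n)
    (A : Finset (Fin (n + 1) → Fin (k + 1))) (hA : IsCompressed A)
    (hB1 : Bge k (n + 1) 1 ⊆ A)
    (y : Fin (n + 1) → Fin (k + 1)) (hy : y ∈ dShadow (A ∩ Bexact k (n + 1) 0))
    (x : Fin (n + 1) → Fin (k + 1)) (hx0 : (rset x 0).card = 1) (hxy : ple x y)
    (i : Fin (n + 1)) (hi : x i = y i) :
    x ∈ dShadow (A ∩ Bexact k (n + 1) 0) := by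
  classical
  simp only [dShadow, Finset.mem_biUnion, Finset.mem_image, Finset.mem_filter, Finset.mem_univ,
    true_and] at hy
  obtain ⟨z, hzAB, p, hzp, hyz⟩ := hy
  subst hyz
  rw [Finset.mem_inter] at hzAB
  obtain ⟨hzA, hzB⟩ := hzAB
  have hz0 : rset z 0 = ∅ := Finset.card_eq_zero.1 (by simpa [Bexact] using hzB)
  have hznz : ∀ a, (z a : ℕ) ≠ 0 := by
    intro a h0
    have ha : a ∈ rset z 0 := mem_rset.2 h0
    rw [hz0] at ha
    simp at ha
  have hu1 : 1 ≤ (z p : ℕ) := Nat.one_le_iff_ne_zero.2 (hznz p)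
  have hy0 : rset (Function.update z p 0) 0 = {p} := by
    rw [rset_update]; simp [hz0]
  have hyj : ∀ j : ℕ, j ≠ 0 → rset (Function.update z p 0) j = (rset z j).erase p := by
    intro j hj
    rw [rset_update, if_neg]
    simp only [Fin.val_zero]
    exact fun h => hj h.symm
  have hzu : rset z (z p : ℕ) = insert p (rset (Function.update z p 0) (z p : ℕ)) := by
    rw [hyj _ (hznz p), Finset.insert_erase (mem_rset.2 rfl)]
  have hzj : ∀ j : ℕ, j ≠ 0 → j ≠ (z p : ℕ) →
      rset z j = rset (Function.update z p 0) j := by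
    intro j hj hju
    rw [hyj _ hj, Finset.erase_eq_of_notMem]
    exact fun hh => hju (mem_rset.1 hh).symm
  obtain ⟨q, hq⟩ := Finset.card_eq_one.1 hx0
  have hxq : (x q : ℕ) = 0 := mem_rset.1 (by rw [hq]; exact Finset.mem_singleton_self q)
  have hxq0 : x q = 0 := Fin.ext (by simpa using hxq)
  have hxnz : ∀ a, a ≠ q → (x a : ℕ) ≠ 0 := by
    intro a ha h0
    have h1 : a ∈ rset x 0 := mem_rset.2 h0
    rw [hq] at h1
    exact ha (Finset.mem_singleton.1 h1)
  have hqx : ∀ j : ℕ, j ≠ 0 → q ∉ rset x j := by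
    intro j hj hh
    have := mem_rset.1 hh
    omega
  have hwj : ∀ (v : Fin (k+1)) (j : ℕ), j ≠ 0 →
      rset (Function.update x q v) j =
        if (v : ℕ) = j then insert q (rset x j) else rset x j := by
    intro v j hj
    rw [rset_update]
    by_cases hv : (v : ℕ) = j
    · simp [hv]
    · simp [hv, Finset.erase_eq_of_notMem (hqx j hj)]
  have hw0 : ∀ v : Fin (k+1), (v : ℕ) ≠ 0 → rset (Function.update x q v) 0 = ∅ := by
    intro v hv
    rw [rset_update, if_neg hv, hq, Finset.erase_singleton]
  have final : ∀ v : Fin (k+1), (v : ℕ) ≠ 0 → Function.update x q v i = z i →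
      ple (Function.update x q v) z → x ∈ dShadow (A ∩ Bexact k (n+1) 0) := by
    intro v hv hwi hple
    have hwA : Function.update x q v ∈ A := mem_of_ple_slice A hA i hzA hwi hple
    have hwB : Function.update x q v ∈ Bexact k (n+1) 0 := by
      simp only [Bexact, Finset.mem_filter, Finset.mem_univ, true_and]
      rw [hw0 v hv]
      rfl
    simp only [dShadow, Finset.mem_biUnion, Finset.mem_image, Finset.mem_filter,
      Finset.mem_univ, true_and]
    refine ⟨Function.update x q v, Finset.mem_inter.2 ⟨hwA, hwB⟩, q, ?_, ?_⟩
    · rw [Function.update_self]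
      intro h0
      exact hv (by rw [h0]; rfl)
    · funext a
      by_cases haq : a = q
      · subst haq
        rw [Function.update_self]
        exact hxq0.symm
      · rw [Function.update_of_ne haq, Function.update_of_ne haq]
  rcases hxy with hxy | hxy
  · simp only [dShadow, Finset.mem_biUnion, Finset.mem_image, Finset.mem_filter,
      Finset.mem_univ, true_and]
    exact ⟨z, Finset.mem_inter.2 ⟨hzA, hzB⟩, p, hzp, hxy.symm⟩
  rcases hxy with hlt | ⟨-, m, hb, he⟩
  · rw [hy0, hq] at hlt
    simp at hlt
  have hm0 : m ≠ 0 := by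
    rintro rfl
    obtain ⟨e, heY, heX, -⟩ := hb
    rw [hy0] at heY
    rw [hq] at heX
    have hep : e = p := Finset.mem_singleton.1 heY
    have hpq : p ≠ q := fun h => heX (Finset.mem_singleton.2 (hep.trans h))
    have hyqnz : ((Function.update z p 0) q : ℕ) ≠ 0 := by
      rw [Function.update_of_ne (Ne.symm hpq)]
      exact hznz q
    have hqy : q ∈ rset (Function.update z p 0) ((Function.update z p 0) q : ℕ) :=
      mem_rset.2 rfl
    rw [← he _ (Nat.pos_of_ne_zero hyqnz)] at hqy
    have := mem_rset.1 hqy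
    omega
  by_cases hpq : p = q
  · subst hpq
    refine final (z p) (hznz p) ?_ (Or.inr (Or.inr ⟨?_, m, ?_, ?_⟩))
    · by_cases hip : i = p
      · subst hip
        rw [Function.update_self]
      · rw [Function.update_of_ne hip, hi, Function.update_of_ne hip]
    · rw [hw0 _ (hznz p), hz0]
    · rw [hwj _ m hm0]
      by_cases hum : (z p : ℕ) = m
      · rw [if_pos hum]
        have hzm : rset z m = insert p (rset (Function.update z p 0) m) := by
          rw [← hum]; exact hzu
        rw [hzm]
        refine binLT_insert_insert hb ?_
        intro hh
        have h2 := mem_rset.1 hh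
        rw [Function.update_self] at h2
        simp only [Fin.val_zero] at h2
        exact hm0 h2.symm
      · rw [if_neg hum, hzj m hm0 (fun h => hum h.symm)]
        exact hb
    · intro j hj
      have hj0 : j ≠ 0 := by omega
      rw [hwj _ j hj0, he j hj]
      by_cases huj : (z p : ℕ) = j
      · rw [if_pos huj]
        have hzm : rset z j = insert p (rset (Function.update z p 0) j) := by
          rw [← huj]; exact hzu
        rw [hzm]
      · rw [if_neg huj, hzj j hj0 (fun h => huj h.symm)]
  · -- p ≠ q
    have hiq : i ≠ q := by
      rintro rfl
      rw [Function.update_of_ne (fun h => hpq h.symm)] at hi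
      exact hznz i (by rw [← hi]; exact hxq)
    have hip : i ≠ p := by
      rintro rfl
      rw [Function.update_self] at hi
      exact hxnz i hpq (by simp [hi])
    have hwi : ∀ v : Fin (k+1), Function.update x q v i = z i := by
      intro v
      rw [Function.update_of_ne hiq, hi, Function.update_of_ne hip]
    set v1 : Fin (k+1) := ⟨1, by omega⟩ with hv1
    have hv1v : (v1 : ℕ) = 1 := rfl
    have hv1nz : (v1 : ℕ) ≠ 0 := by rw [hv1v]; exact Nat.one_ne_zero
    have hpy : ∀ j : ℕ, j ≠ 0 → p ∉ rset (Function.update z p 0) j := by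
      intro j hj hh
      have h2 := mem_rset.1 hh
      rw [Function.update_self] at h2
      simp only [Fin.val_zero] at h2
      omega
    by_cases hum : m < (z p : ℕ)
    · refine final v1 hv1nz (hwi v1) (Or.inr (Or.inr ⟨?_, (z p : ℕ), ?_, ?_⟩))
      · rw [hw0 v1 hv1nz, hz0]
      · rw [hwj v1 _ (by omega), if_neg (by rw [hv1v]; omega), he _ hum, hzu]
        exact binLT_self_insert (hpy _ (by omega))
      · intro j hj
        have hj0 : j ≠ 0 := by omega
        rw [hwj v1 j hj0, if_neg (by rw [hv1v]; omega), he j (by omega),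
          hzj j hj0 (by omega)]
    · by_cases hm1 : 2 ≤ m
      · refine final v1 hv1nz (hwi v1) (Or.inr (Or.inr ⟨?_, m, ?_, ?_⟩))
        · rw [hw0 v1 hv1nz, hz0]
        · rw [hwj v1 m hm0, if_neg (by rw [hv1v]; omega)]
          by_cases hum2 : (z p : ℕ) = m
          · have hzm : rset z m = insert p (rset (Function.update z p 0) m) := by
              rw [← hum2]; exact hzu
            rw [hzm]
            exact binLT_insert_right hb (hpy m hm0)
          · rw [hzj m hm0 (fun h => hum2 h.symm)]
            exact hb
        · intro j hj
          have hj0 : j ≠ 0 := by omega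
          rw [hwj v1 j hj0, if_neg (by rw [hv1v]; omega), he j hj, hzj j hj0 (by omega)]
      · have hm : m = 1 := by omega
        have hu : (z p : ℕ) = 1 := by omega
        subst hm
        refine final v1 hv1nz (hwi v1) (Or.inl ?_)
        funext a
        by_cases haq : a = q
        · subst haq
          rw [Function.update_self]
          have hyq : ((Function.update z p 0) a : ℕ) ≠ 0 := by
            rw [Function.update_of_ne (fun h => hpq h.symm)]
            exact hznz a
          have h2 : ((Function.update z p 0) a : ℕ) = 1 := by
            by_contra hc
            have hmm : a ∈ rset (Function.update z p 0) ((Function.update z p 0) a : ℕ) :=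
              mem_rset.2 rfl
            rw [← he ((Function.update z p 0) a : ℕ) (by omega)] at hmm
            have h3 := mem_rset.1 hmm
            omega
          have h3 : (z a : ℕ) = 1 := by
            rwa [Function.update_of_ne (fun h => hpq h.symm)] at h2
          exact Fin.ext (by rw [hv1v, h3])
        · by_cases hap : a = p
          · subst hap
            rw [Function.update_of_ne haq]
            have hxp : (x a : ℕ) = 1 := by
              have hnz := hxnz a haq
              by_contra hc
              have hmm : a ∈ rset x (x a : ℕ) := mem_rset.2 rfl
              rw [he (x a : ℕ) (by omega)] at hmm
              have h3 := mem_rset.1 hmm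
              rw [Function.update_self] at h3
              simp only [Fin.val_zero] at h3
              omega
            exact Fin.ext (by rw [hxp, hu])
          · rw [Function.update_of_ne haq]
            have h1 : (x a : ℕ) ≠ 0 := hxnz a haq
            have hza : ((Function.update z p 0) a : ℕ) = (z a : ℕ) := by
              rw [Function.update_of_ne hap]
            by_cases h2 : (x a : ℕ) = 1
            · have hya : ((Function.update z p 0) a : ℕ) ≠ 0 := by
                rw [hza]; exact hznz a
              have hya1 : ((Function.update z p 0) a : ℕ) = 1 := by
                by_contra hc
                have hmm : a ∈ rset (Function.update z p 0) ((Function.update z p 0) a : ℕ) :=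
                  mem_rset.2 rfl
                rw [← he ((Function.update z p 0) a : ℕ) (by omega)] at hmm
                have h3 := mem_rset.1 hmm
                omega
              exact Fin.ext (by rw [h2, ← hza, hya1])
            · have hmm : a ∈ rset x (x a : ℕ) := mem_rset.2 rfl
              rw [he (x a : ℕ) (by omega)] at hmm
              have h3 := mem_rset.1 hmm
              exact Fin.ext (by rw [← h3, hza])
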